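/- Let A be a unital Pro-C*-algebra, S ⊆ A a local operator system, and φ : S → M_n(ℂ) a linear map. The following are equivalent: (1) φ is local completely positive; (2) φ is n-local positive (φ^{(n)} maps C_α^n into M_{n²}(ℂ)^+ for some α); (3) the associated functional s_φ on M_n(S) given by s_φ((a_{ij})) = (1/n) Σ_{i,j} φ(a_{ij})_{(i,j)} is local positive. -/

import Mathlib

open scoped ComplexOrder

noncomputable section

variable {V : Type} [AddCommGroup V] [Module ℂ V]

/-- Conjugation `Xᴴ A X` of a `V`-valued matrix by a scalar matrix `X`. -/
def sconj {n m : ℕ} (X : Matrix (Fin n) (Fin m) ℂ)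
    (A : Matrix (Fin n) (Fin n) V) : Matrix (Fin m) (Fin m) V :=
  Matrix.of fun i j => ∑ p, ∑ q, ((starRingEnd ℂ) (X p i) * X q j) • A p q

/-- A (not necessarily proper) cone in a complex vector space. -/
def IsVCone {M : Type} [AddCommGroup M] [Module ℂ M] (C : Set M) : Prop :=
  (0 : M) ∈ C ∧ (∀ x ∈ C, ∀ y ∈ C, x + y ∈ C) ∧
    ∀ r : ℝ, 0 ≤ r → ∀ x ∈ C, (r : ℂ) • x ∈ C

/-- A 2×2 block matrix of `n × n` blocks, reindexed to `Fin (n+n)`. -/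
def blk {n : ℕ} (A B C D : Matrix (Fin n) (Fin n) V) :
    Matrix (Fin (n + n)) (Fin (n + n)) V :=
  Matrix.reindex finSumFinEquiv finSumFinEquiv (Matrix.fromBlocks A B C D)

/-- The diagonal matrix `diag (e, …, e)`. -/
def diagE (e : V) (n : ℕ) : Matrix (Fin n) (Fin n) V :=
  Matrix.diagonal fun _ => e

variable [StarAddMonoid V] [StarModule ℂ V]

/-- The seminorm at level `(α, n)` induced by the matrix cones `C` and the unit `e`:
`‖X‖_α^n = inf { r ≥ 0 : [[r eₙ, X],[X*, r eₙ]] ∈ C_α^{2n} }`. -/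
def nrm {Γ : Type} (C : Γ → (k : ℕ) → Set (Matrix (Fin k) (Fin k) V)) (e : V)
    (α : Γ) (n : ℕ) (X : Matrix (Fin n) (Fin n) V) : ℝ :=
  sInf {r : ℝ | 0 ≤ r ∧
    blk ((r : ℂ) • diagE e n) X (star X) ((r : ℂ) • diagE e n) ∈ C α (n + n)}

/-- A local matrix *-ordering on `V`: a downward filtered family of compatible matrix
cones of hermitian matrices whose total intersection with their negatives is trivial. -/
structure LMOrder (Γ : Type) (V : Type) [AddCommGroup V] [Module ℂ V]
    [StarAddMonoid V] [StarModule ℂ V] where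
  C : Γ → (n : ℕ) → Set (Matrix (Fin n) (Fin n) V)
  cone : ∀ α n, IsVCone (C α n)
  herm : ∀ α n, ∀ A ∈ C α n, star A = A
  filtered : ∀ α β : Γ, ∃ γ, ∀ n, C γ n ⊆ C α n ∩ C β n
  proper : ∀ n (A : Matrix (Fin n) (Fin n) V), (∀ α, A ∈ C α n ∧ -A ∈ C α n) → A = 0
  compat : ∀ (α : Γ) (n m : ℕ) (X : Matrix (Fin n) (Fin m) ℂ),
    ∀ A ∈ C α n, sconj X A ∈ C α m

/-- An abstract local operator system: a local matrix *-ordering together with an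
Archimedean matrix order unit. -/
structure LocalOpSys (Γ : Type) (V : Type) [AddCommGroup V] [Module ℂ V]
    [StarAddMonoid V] [StarModule ℂ V] extends LMOrder Γ V where
  e : V
  eherm : star e = e
  unit : ∀ (α : Γ) (n : ℕ) (A : Matrix (Fin n) (Fin n) V), star A = A →
    ∃ r : ℝ, 0 < r ∧ (r : ℂ) • diagE e n - A ∈ C α n
  arch : ∀ (α : Γ) (n : ℕ) (A : Matrix (Fin n) (Fin n) V),
    (∀ r : ℝ, 0 < r → (r : ℂ) • diagE e n + A ∈ C α n) → A ∈ C α n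

/-- An Archimedean local order unit space (`A.L.O.U.` space): ground-level cones only. -/
structure ALOU (Γ : Type) (V : Type) [AddCommGroup V] [Module ℂ V]
    [StarAddMonoid V] [StarModule ℂ V] where
  pos : Γ → Set V
  cone : ∀ α, IsVCone (pos α)
  herm : ∀ α, ∀ v ∈ pos α, star v = v
  filtered : ∀ α β : Γ, ∃ γ, pos γ ⊆ pos α ∩ pos β
  proper : ∀ v : V, (∀ α, v ∈ pos α ∧ -v ∈ pos α) → v = 0
  e : V
  eherm : star e = e
  unit : ∀ (α : Γ) (v : V), star v = v → ∃ r : ℝ, 0 < r ∧ (r : ℂ) • e - v ∈ pos α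
  arch : ∀ (α : Γ) (v : V), (∀ r : ℝ, 0 < r → (r : ℂ) • e + v ∈ pos α) → v ∈ pos α

/-- The minimal matrix cones over a family of ground-level cones. -/
def Cmin {Γ : Type} (pos : Γ → Set V) (α : Γ) (n : ℕ) :
    Set (Matrix (Fin n) (Fin n) V) :=
  {A | ∀ L : Fin n → ℂ, (∑ i, ∑ j, ((starRingEnd ℂ) (L i) * L j) • A i j) ∈ pos α}

/-- The maximal matrix cones over a family of ground-level cones:
sums `Σ aᵢ ⊗ vᵢ` with `aᵢ` positive semidefinite scalar matrices and `vᵢ` positive. -/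
def Dmax {Γ : Type} (pos : Γ → Set V) (α : Γ) (n : ℕ) :
    Set (Matrix (Fin n) (Fin n) V) :=
  {A | ∃ (k : ℕ) (a : Fin k → Matrix (Fin n) (Fin n) ℂ) (v : Fin k → V),
    (∀ i, (a i).PosSemidef) ∧ (∀ i, v i ∈ pos α) ∧
    A = Matrix.of fun p q => ∑ i, (a i p q) • v i}

/-- The amplification `φ⁽ᵏ⁾` of a matrix-valued linear map, realized on the index
type `Fin k × ι`. -/
def ampP {S : Type} [AddCommGroup S] [Module ℂ S] {k : ℕ} {ι : Type} [Fintype ι]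
    (φ : S →ₗ[ℂ] Matrix ι ι ℂ) (M : Matrix (Fin k) (Fin k) S) :
    Matrix (Fin k × ι) (Fin k × ι) ℂ :=
  Matrix.of fun ip jq => φ (M ip.1 jq.1) ip.2 jq.2

end


open Matrix in
lemma quad_single {m : Type} [Fintype m] [DecidableEq m] (A : Matrix m m ℂ) (i j : m) (a b : ℂ) :
    star (fun p => (if p = i then a else 0) + (if p = j then b else 0)) ⬝ᵥ
      A *ᵥ (fun p => (if p = i then a else 0) + (if p = j then b else 0)) =
      (starRingEnd ℂ) a * a * A i i + (starRingEnd ℂ) a * b * A i j +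
        (starRingEnd ℂ) b * a * A j i + (starRingEnd ℂ) b * b * A j j := by
  simp only [dotProduct, Matrix.mulVec, Pi.star_apply, star_add, apply_ite star, star_zero,
    add_mul, mul_add, Finset.sum_add_distrib, mul_ite, ite_mul, zero_mul, mul_zero,
    Finset.mul_sum, Finset.sum_ite_eq, Finset.sum_ite_eq', Finset.mem_univ, if_true]
  simp only [RCLike.star_def]
  ring

open Matrix in
lemma psd_of_quad {m : Type} [Fintype m] [DecidableEq m] (A : Matrix m m ℂ)
    (h : ∀ x : m → ℂ, 0 ≤ star x ⬝ᵥ A *ᵥ x) : A.PosSemidef := by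
  have him : ∀ x : m → ℂ, (star x ⬝ᵥ A *ᵥ x).im = 0 :=
    fun x => ((Complex.le_def.mp (h x)).2).symm
  refine Matrix.PosSemidef.of_dotProduct_mulVec_nonneg ?_ fun x => h x
  ext i j
  have h0 := him fun p => (if p = i then (1:ℂ) else 0) + (if p = i then (0:ℂ) else 0)
  have h0' := him fun p => (if p = j then (1:ℂ) else 0) + (if p = j then (0:ℂ) else 0)
  have h1 := him fun p => (if p = i then (1:ℂ) else 0) + (if p = j then (1:ℂ) else 0)
  have h2 := him fun p => (if p = i then (1:ℂ) else 0) + (if p = j then Complex.I else 0)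
  rw [quad_single] at h0 h0' h1 h2
  simp only [_root_.map_one, map_zero, Complex.neg_re, Complex.neg_im, one_mul, mul_one,
    zero_mul, mul_zero, add_zero, zero_add, Complex.add_im, Complex.mul_im, Complex.mul_re,
    Complex.I_re, Complex.I_im, Complex.one_re, Complex.one_im, Complex.conj_I] at h0 h0' h1 h2
  simp only [Matrix.conjTranspose_apply, RCLike.star_def, Complex.ext_iff, Complex.conj_re,
    Complex.conj_im]
  constructor <;> linarith [h0, h0', h1, h2]

lemma sum4perm {α β γ δ M : Type*} [Fintype α] [Fintype β] [Fintype γ] [Fintype δ]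
    [AddCommMonoid M] (f : α → β → γ → δ → M) :
    ∑ p : β, ∑ q : δ, ∑ i : α, ∑ j : γ, f i p j q
      = ∑ i : α, ∑ p : β, ∑ j : γ, ∑ q : δ, f i p j q := by
  calc ∑ p : β, ∑ q : δ, ∑ i : α, ∑ j : γ, f i p j q
      = ∑ p : β, ∑ i : α, ∑ q : δ, ∑ j : γ, f i p j q := by
        exact Finset.sum_congr rfl fun p _ => Finset.sum_comm
    _ = ∑ i : α, ∑ p : β, ∑ q : δ, ∑ j : γ, f i p j q := Finset.sum_comm
    _ = ∑ i : α, ∑ p : β, ∑ j : γ, ∑ q : δ, f i p j q := by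
        exact Finset.sum_congr rfl fun i _ => Finset.sum_congr rfl fun p _ =>
          Finset.sum_comm

lemma quad_eq {V : Type} [AddCommGroup V] [Module ℂ V] {k n : ℕ}
    (φ : V →ₗ[ℂ] Matrix (Fin n) (Fin n) ℂ) (M : Matrix (Fin k) (Fin k) V)
    (x : Fin k × Fin n → ℂ) :
    dotProduct (star x) ((ampP φ M).mulVec x)
      = ∑ p, ∑ q, φ ((sconj (Matrix.of fun i r => x (i, r)) M) p q) p q := by
  simp only [sconj, Matrix.of_apply, map_sum, map_smul, Matrix.sum_apply, Matrix.smul_apply,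
    smul_eq_mul, dotProduct, Matrix.mulVec, ampP, Pi.star_apply, Finset.mul_sum,
    Fintype.sum_prod_type]
  rw [sum4perm fun i p j q => ((starRingEnd ℂ) (x (i, p)) * x (j, q)) * φ (M i j) p q]
  refine Finset.sum_congr rfl fun i _ => Finset.sum_congr rfl fun p _ =>
    Finset.sum_congr rfl fun j _ => Finset.sum_congr rfl fun q _ => ?_
  simp only [RCLike.star_def]
  ring

lemma delta_quad {n : ℕ} (A : Matrix (Fin n × Fin n) (Fin n × Fin n) ℂ) :
    dotProduct (star (fun pr : Fin n × Fin n => if pr.1 = pr.2 then (1:ℂ) else 0))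
      (A.mulVec (fun pr : Fin n × Fin n => if pr.1 = pr.2 then (1:ℂ) else 0))
      = ∑ p, ∑ q, A (p, p) (q, q) := by
  simp only [dotProduct, Matrix.mulVec, Pi.star_apply, Fintype.sum_prod_type,
    apply_ite star, star_one, star_zero, ite_mul, mul_ite, one_mul, mul_one, zero_mul,
    mul_zero, Finset.sum_ite_eq, Finset.sum_ite_eq', Finset.mem_univ, if_true]

/-- for a linear map `φ : S → M_n(ℂ)` on a local operator system the
following are equivalent: (1) `φ` is local completely positive; (2) `φ` is `n`-local
positive; (3) the associated functional `s_φ` is local positive. -/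
theorem statement14 {Γ V : Type} [AddCommGroup V] [Module ℂ V] [StarAddMonoid V]
    [StarModule ℂ V] (S : LocalOpSys Γ V) (n : ℕ) (hn : 0 < n)
    (φ : V →ₗ[ℂ] Matrix (Fin n) (Fin n) ℂ) :
    ((∃ α : Γ, ∀ (k : ℕ) (M : Matrix (Fin k) (Fin k) V),
        M ∈ S.C α k → (ampP φ M).PosSemidef) ↔
      (∃ α : Γ, ∀ M : Matrix (Fin n) (Fin n) V,
        M ∈ S.C α n → (ampP φ M).PosSemidef)) ∧
    ((∃ α : Γ, ∀ M : Matrix (Fin n) (Fin n) V,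
        M ∈ S.C α n → (ampP φ M).PosSemidef) ↔
      (∃ α : Γ, ∀ M : Matrix (Fin n) (Fin n) V, M ∈ S.C α n →
        ∃ t : ℝ, 0 ≤ t ∧ ((n : ℂ))⁻¹ * ∑ i, ∑ j, φ (M i j) i j = (t : ℂ))) := by
  classical
  have key : ∀ (α : Γ),
      (∀ M : Matrix (Fin n) (Fin n) V, M ∈ S.C α n → (ampP φ M).PosSemidef) →
      ∀ (k : ℕ) (M : Matrix (Fin k) (Fin k) V), M ∈ S.C α k → (ampP φ M).PosSemidef := by
    intro α h k M hM
    apply psd_of_quad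
    intro x
    rw [quad_eq]
    have hN := S.compat α k n (Matrix.of fun i r => x (i, r)) M hM
    have h2 := (h _ hN).dotProduct_mulVec_nonneg (fun pr : Fin n × Fin n => if pr.1 = pr.2 then (1:ℂ) else 0)
    rw [delta_quad] at h2
    simpa [ampP] using h2
  refine ⟨⟨fun ⟨α, h⟩ => ⟨α, fun M hM => h n M hM⟩, fun ⟨α, h⟩ => ⟨α, key α h⟩⟩, ?_, ?_⟩
  · rintro ⟨α, h⟩
    refine ⟨α, fun M hM => ?_⟩
    have h2 := (h M hM).dotProduct_mulVec_nonneg (fun pr : Fin n × Fin n => if pr.1 = pr.2 then (1:ℂ) else 0)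
    rw [delta_quad] at h2
    have h2' : (0:ℂ) ≤ ∑ i, ∑ j, φ (M i j) i j := by simpa [ampP] using h2
    obtain ⟨hre, him⟩ := Complex.le_def.mp h2'
    refine ⟨(∑ i, ∑ j, φ (M i j) i j).re / n,
      div_nonneg (by simpa using hre) (Nat.cast_nonneg n), ?_⟩
    have hs' : (∑ i, ∑ j, φ (M i j) i j) = (((∑ i, ∑ j, φ (M i j) i j).re : ℝ) : ℂ) := by
      apply Complex.ext <;> simp [← him]
    have hn' : (n : ℂ) ≠ 0 := Nat.cast_ne_zero.mpr hn.ne'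
    rw [inv_mul_eq_iff_eq_mul₀ hn']
    conv_lhs => rw [hs']
    push_cast
    field_simp
  · rintro ⟨α, h⟩
    refine ⟨α, fun M hM => ?_⟩
    apply psd_of_quad
    intro x
    rw [quad_eq]
    have hN := S.compat α n n (Matrix.of fun i r => x (i, r)) M hM
    obtain ⟨t, ht, hts⟩ := h _ hN
    have hn' : (n : ℂ) ≠ 0 := Nat.cast_ne_zero.mpr hn.ne'
    rw [inv_mul_eq_iff_eq_mul₀ hn'] at hts
    rw [hts]
    have h0n : (0:ℂ) ≤ (n : ℂ) := by
      rw [show ((n:ℂ)) = ((n:ℝ) : ℂ) by push_cast; ring]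
      exact Complex.zero_le_real.2 (Nat.cast_nonneg n)
    exact mul_nonneg h0n (Complex.zero_le_real.2 ht)
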